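/- Let v = (R,P,Q) : ℝ⁴ → ℝ³ be C¹ in coordinates (u,z,x,y), periodic in x and y with period 1, satisfying 2R_u = P_x + Q_y + R_z, P_z = R_x, Q_z = R_y on the wedge u ≥ 0, z ≥ 0. Then for every T > 0, ∫_{u+z=T} (R² + P² + Q²) dz dx dy ≤ 2 ( ∫_{u=0, 0≤z≤T} R² dz dx dy + ∫_{z=0, 0≤u≤T} (P² + Q²) du dx dy ), where the x,y integrals are over one period cell. -/

import Mathlib

open MeasureTheory Function Set

/-- Partial derivative in the `a`-th coordinate direction of `ℝ⁴`. -/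
noncomputable def pd (a : Fin 4) (f : (Fin 4 → ℝ) → ℝ) (x : Fin 4 → ℝ) : ℝ :=
  fderiv ℝ f x (Pi.single a 1)

lemma continuous_pd {f : (Fin 4 → ℝ) → ℝ} (hf : ContDiff ℝ 1 f) (i : Fin 4) :
    Continuous (pd i f) := by
  have h := (hf.fderiv_right (m := 0) le_rfl).continuous
  exact (ContinuousLinearMap.apply ℝ ℝ (Pi.single i 1)).continuous.comp h

lemma hasDerivAt_upd {f : (Fin 4 → ℝ) → ℝ} (hf : ContDiff ℝ 1 f) (i : Fin 4)
    (p : Fin 4 → ℝ) (t : ℝ) :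
    HasDerivAt (fun s => f (Function.update p i s)) (pd i f (Function.update p i t)) t := by
  have hγ : HasDerivAt (fun s : ℝ => Function.update p i s) (Pi.single i 1) t := by
    have : (fun s : ℝ => Function.update p i s)
        = fun s => Function.update p i 0 + s • Pi.single i 1 := by
      funext s; ext j
      by_cases h : j = i
      · subst h; simp
      · simp [Function.update_of_ne h, Pi.single_eq_of_ne h]
    rw [this]
    simpa using ((hasDerivAt_id t).smul_const (Pi.single i (1:ℝ))).const_add
      (Function.update p i 0)
  have hd : HasFDerivAt f (fderiv ℝ f (Function.update p i t)) (Function.update p i t) :=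
    (hf.differentiable one_ne_zero _).hasFDerivAt
  exact hd.comp_hasDerivAt t hγ

lemma key_ftc {f : (Fin 4 → ℝ) → ℝ} (hf : ContDiff ℝ 1 f) (i : Fin 4)
    (p : Fin 4 → ℝ) (a b : ℝ) :
    ∫ t in a..b, pd i f (Function.update p i t)
      = f (Function.update p i b) - f (Function.update p i a) := by
  refine intervalIntegral.integral_eq_sub_of_hasDerivAt
    (fun t _ => hasDerivAt_upd hf i p t) ?_
  exact ((continuous_pd hf i).comp
    (continuous_const.update i continuous_id)).intervalIntegrable _ _

lemma rect_swap (F : ℝ → ℝ → ℝ) (hF : Continuous (Function.uncurry F))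
    {a b : ℝ} (ha : 0 ≤ a) (hb : 0 ≤ b) :
    ∫ x in (0:ℝ)..a, ∫ y in (0:ℝ)..b, F x y
      = ∫ y in (0:ℝ)..b, ∫ x in (0:ℝ)..a, F x y := by
  have hInt : Integrable (Function.uncurry F)
      ((volume.restrict (Ioc 0 a)).prod (volume.restrict (Ioc 0 b))) := by
    rw [Measure.prod_restrict, ← Measure.volume_eq_prod]
    refine (hF.continuousOn.integrableOn_compact
      (isCompact_Icc (a := ((0:ℝ),(0:ℝ))) (b := (a, b)))).mono_set ?_
    rw [← Set.Icc_prod_Icc]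
    exact Set.prod_mono Ioc_subset_Icc_self Ioc_subset_Icc_self
  rw [intervalIntegral.integral_of_le ha, intervalIntegral.integral_of_le hb]
  simp_rw [intervalIntegral.integral_of_le hb, intervalIntegral.integral_of_le ha]
  exact integral_integral_swap hInt

lemma tri_swap (g : ℝ → ℝ → ℝ) (hg : Continuous (Function.uncurry g))
    {T : ℝ} (hT : 0 ≤ T) :
    ∫ z in (0:ℝ)..T, ∫ u in (0:ℝ)..(T - z), g u z
      = ∫ u in (0:ℝ)..T, ∫ z in (0:ℝ)..(T - u), g u z := by
  set φ : ℝ × ℝ → ℝ := fun q =>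
    if 0 < q.1 ∧ 0 < q.2 ∧ q.1 + q.2 ≤ T then g q.1 q.2 else 0 with hφ
  have hS : MeasurableSet {q : ℝ × ℝ | 0 < q.1 ∧ 0 < q.2 ∧ q.1 + q.2 ≤ T} := by
    apply MeasurableSet.inter (measurableSet_lt measurable_const measurable_fst)
    exact MeasurableSet.inter (measurableSet_lt measurable_const measurable_snd)
      (measurableSet_le (measurable_fst.add measurable_snd) measurable_const)
  have hφ_eq : φ = Set.indicator {q : ℝ × ℝ | 0 < q.1 ∧ 0 < q.2 ∧ q.1 + q.2 ≤ T}
      (fun q => g q.1 q.2) := by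
    funext q; rw [Set.indicator_apply]; rfl
  have hInt : Integrable φ (volume : Measure (ℝ × ℝ)) := by
    rw [hφ_eq, integrable_indicator_iff hS]
    refine ((hg.continuousOn).integrableOn_compact
      (isCompact_Icc (a := ((0:ℝ),(0:ℝ))) (b := (T, T)))).mono_set ?_
    rintro ⟨u, z⟩ ⟨h1, h2, h3⟩
    rw [← Set.Icc_prod_Icc]
    exact ⟨⟨h1.le, by linarith⟩, ⟨h2.le, by linarith⟩⟩
  have hrep1 : ∀ z : ℝ, Set.indicator (Ioc 0 T)
      (fun z' => ∫ u in (0:ℝ)..(T - z'), g u z') z = ∫ u : ℝ, φ (u, z) := by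
    intro z
    by_cases hz : z ∈ Ioc 0 T
    · rw [Set.indicator_of_mem hz]
      obtain ⟨hz0, hzT⟩ := hz
      rw [intervalIntegral.integral_of_le (by linarith),
        ← integral_indicator measurableSet_Ioc]
      congr 1; funext u
      rw [Set.indicator_apply, hφ]
      simp only [mem_Ioc]
      by_cases hu : 0 < u ∧ u ≤ T - z
      · rw [if_pos hu, if_pos ⟨hu.1, hz0, by linarith [hu.2]⟩]
      · rw [if_neg hu, if_neg]
        rintro ⟨h1, h2, h3⟩
        exact hu ⟨h1, by linarith⟩
    · rw [Set.indicator_of_notMem hz]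
      rw [mem_Ioc, not_and_or, not_lt, not_le] at hz
      have h0 : ∀ u : ℝ, φ (u, z) = 0 := by
        intro u
        simp only [hφ]
        rw [if_neg]
        rintro ⟨h1, h2, h3⟩
        rcases hz with h | h <;> linarith
      simp only [h0, integral_zero]
  have hrep2 : ∀ u : ℝ, Set.indicator (Ioc 0 T)
      (fun u' => ∫ z in (0:ℝ)..(T - u'), g u' z) u = ∫ z : ℝ, φ (u, z) := by
    intro u
    by_cases hu : u ∈ Ioc 0 T
    · rw [Set.indicator_of_mem hu]
      obtain ⟨hu0, huT⟩ := hu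
      rw [intervalIntegral.integral_of_le (by linarith),
        ← integral_indicator measurableSet_Ioc]
      congr 1; funext z
      rw [Set.indicator_apply, hφ]
      simp only [mem_Ioc]
      by_cases hz : 0 < z ∧ z ≤ T - u
      · rw [if_pos hz, if_pos ⟨hu0, hz.1, by linarith [hz.2]⟩]
      · rw [if_neg hz, if_neg]
        rintro ⟨h1, h2, h3⟩
        exact hz ⟨h2, by linarith⟩
    · rw [Set.indicator_of_notMem hu]
      rw [mem_Ioc, not_and_or, not_lt, not_le] at hu
      have h0 : ∀ z : ℝ, φ (u, z) = 0 := by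
        intro z
        simp only [hφ]
        rw [if_neg]
        rintro ⟨h1, h2, h3⟩
        rcases hu with h | h <;> linarith
      simp only [h0, integral_zero]
  have swap : ∫ z : ℝ, (∫ u : ℝ, φ (u, z)) = ∫ u : ℝ, (∫ z : ℝ, φ (u, z)) := by
    have : Integrable (Function.uncurry fun z u => φ (u, z))
        ((volume : Measure ℝ).prod volume) := by
      rw [Measure.volume_eq_prod] at hInt
      exact hInt.swap
    exact integral_integral_swap this
  calc ∫ z in (0:ℝ)..T, ∫ u in (0:ℝ)..(T - z), g u z
      = ∫ z : ℝ, Set.indicator (Ioc 0 T)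
          (fun z' => ∫ u in (0:ℝ)..(T - z'), g u z') z := by
        rw [integral_indicator measurableSet_Ioc, intervalIntegral.integral_of_le hT]
    _ = ∫ z : ℝ, ∫ u : ℝ, φ (u, z) := by simp only [hrep1]
    _ = ∫ u : ℝ, ∫ z : ℝ, φ (u, z) := swap
    _ = ∫ u : ℝ, Set.indicator (Ioc 0 T)
          (fun u' => ∫ z in (0:ℝ)..(T - u'), g u' z) u := by simp only [hrep2]
    _ = ∫ u in (0:ℝ)..T, ∫ z in (0:ℝ)..(T - u), g u z := by
        rw [integral_indicator measurableSet_Ioc, intervalIntegral.integral_of_le hT]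

lemma pd_mul {f g : (Fin 4 → ℝ) → ℝ} (hf : ContDiff ℝ 1 f) (hg : ContDiff ℝ 1 g)
    (i : Fin 4) (p : Fin 4 → ℝ) :
    pd i (fun q => f q * g q) p = pd i f p * g p + f p * pd i g p := by
  unfold pd
  rw [fderiv_fun_mul (hf.differentiable one_ne_zero p) (hg.differentiable one_ne_zero p)]
  simp [mul_comm]
  ring

lemma pd_sq {f : (Fin 4 → ℝ) → ℝ} (hf : ContDiff ℝ 1 f) (i : Fin 4) (p : Fin 4 → ℝ) :
    pd i (fun q => f q ^ 2) p = 2 * f p * pd i f p := by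
  have : (fun q => f q ^ 2) = fun q => f q * f q := by funext q; ring
  rw [this, pd_mul hf hf]; ring

lemma pd_add {f g : (Fin 4 → ℝ) → ℝ} (hf : ContDiff ℝ 1 f) (hg : ContDiff ℝ 1 g)
    (i : Fin 4) (p : Fin 4 → ℝ) :
    pd i (fun q => f q + g q) p = pd i f p + pd i g p := by
  unfold pd
  rw [fderiv_fun_add (hf.differentiable one_ne_zero p) (hg.differentiable one_ne_zero p)]; simp

lemma pd_sub {f g : (Fin 4 → ℝ) → ℝ} (hf : ContDiff ℝ 1 f) (hg : ContDiff ℝ 1 g)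
    (i : Fin 4) (p : Fin 4 → ℝ) :
    pd i (fun q => f q - g q) p = pd i f p - pd i g p := by
  unfold pd
  rw [fderiv_fun_sub (hf.differentiable one_ne_zero p) (hg.differentiable one_ne_zero p)]; simp

lemma pd_const_mul {f : (Fin 4 → ℝ) → ℝ} (hf : ContDiff ℝ 1 f) (c : ℝ)
    (i : Fin 4) (p : Fin 4 → ℝ) :
    pd i (fun q => c * f q) p = c * pd i f p := by
  unfold pd
  rw [fderiv_const_mul (hf.differentiable one_ne_zero p)]; simp

@[fun_prop]
lemma cont_vec4 {X : Type*} [TopologicalSpace X] {a b c d : X → ℝ}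
    (ha : Continuous a) (hb : Continuous b) (hc : Continuous c) (hd : Continuous d) :
    Continuous fun v => (![a v, b v, c v, d v] : Fin 4 → ℝ) := by
  apply continuous_pi; intro j
  fin_cases j <;> simpa

lemma upd0 (u z x y t : ℝ) : Function.update ![u, z, x, y] 0 t = ![t, z, x, y] := by
  funext j; fin_cases j <;> simp [Function.update]
lemma upd1 (u z x y t : ℝ) : Function.update ![u, z, x, y] 1 t = ![u, t, x, y] := by
  funext j; fin_cases j <;> simp [Function.update]
lemma upd2 (u z x y t : ℝ) : Function.update ![u, z, x, y] 2 t = ![u, z, t, y] := by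
  funext j; fin_cases j <;> simp [Function.update]
lemma upd3 (u z x y t : ℝ) : Function.update ![u, z, x, y] 3 t = ![u, z, x, t] := by
  funext j; fin_cases j <;> simp [Function.update]

/-- Energy estimate for the null-plane characteristic problem of the wave
equation. Coordinates `(u,z,x,y)` are indices `0,1,2,3`; the fields are C¹,
periodic in `x,y` with period 1, and satisfy `2R_u = P_x + Q_y + R_z`,
`P_z = R_x`, `Q_z = R_y` on the wedge `u ≥ 0, z ≥ 0`. Then for every `T > 0`
the energy on `{u + z = T}` is bounded by twice the data integrals on
`{u = 0}` and `{z = 0}`. -/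
theorem stmt_10 (R P Q : (Fin 4 → ℝ) → ℝ)
    (hR : ContDiff ℝ 1 R) (hP : ContDiff ℝ 1 P) (hQ : ContDiff ℝ 1 Q)
    (hperx : ∀ p : Fin 4 → ℝ, R (Function.update p 2 (p 2 + 1)) = R p ∧
      P (Function.update p 2 (p 2 + 1)) = P p ∧
      Q (Function.update p 2 (p 2 + 1)) = Q p)
    (hpery : ∀ p : Fin 4 → ℝ, R (Function.update p 3 (p 3 + 1)) = R p ∧
      P (Function.update p 3 (p 3 + 1)) = P p ∧
      Q (Function.update p 3 (p 3 + 1)) = Q p)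
    (e1 : ∀ p : Fin 4 → ℝ, 0 ≤ p 0 → 0 ≤ p 1 →
      2 * pd 0 R p = pd 2 P p + pd 3 Q p + pd 1 R p)
    (e2 : ∀ p : Fin 4 → ℝ, 0 ≤ p 0 → 0 ≤ p 1 → pd 1 P p = pd 2 R p)
    (e3 : ∀ p : Fin 4 → ℝ, 0 ≤ p 0 → 0 ≤ p 1 → pd 1 Q p = pd 3 R p) :
    ∀ T : ℝ, 0 < T →
      (∫ z in (0:ℝ)..T, ∫ x in (0:ℝ)..1, ∫ y in (0:ℝ)..1,
        (R ![T - z, z, x, y] ^ 2 + P ![T - z, z, x, y] ^ 2 +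
          Q ![T - z, z, x, y] ^ 2))
      ≤ 2 * ((∫ z in (0:ℝ)..T, ∫ x in (0:ℝ)..1, ∫ y in (0:ℝ)..1,
            R ![0, z, x, y] ^ 2)
          + (∫ u in (0:ℝ)..T, ∫ x in (0:ℝ)..1, ∫ y in (0:ℝ)..1,
            (P ![u, 0, x, y] ^ 2 + Q ![u, 0, x, y] ^ 2))) := by
  intro T hT
  obtain ⟨A, hA_def⟩ : ∃ f : (Fin 4 → ℝ) → ℝ, f = fun q => 2 * R q ^ 2 := ⟨_, rfl⟩
  obtain ⟨B, hB_def⟩ : ∃ f : (Fin 4 → ℝ) → ℝ,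
    f = fun q => P q ^ 2 + Q q ^ 2 - R q ^ 2 := ⟨_, rfl⟩
  obtain ⟨C, hC_def⟩ : ∃ f : (Fin 4 → ℝ) → ℝ, f = fun q => 2 * (R q * P q) := ⟨_, rfl⟩
  obtain ⟨D, hD_def⟩ : ∃ f : (Fin 4 → ℝ) → ℝ, f = fun q => 2 * (R q * Q q) := ⟨_, rfl⟩
  have hA1 : ContDiff ℝ 1 A := by rw [hA_def]; exact contDiff_const.mul (hR.pow 2)
  have hB1 : ContDiff ℝ 1 B := by
    rw [hB_def]; exact ((hP.pow 2).add (hQ.pow 2)).sub (hR.pow 2)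
  have hC1 : ContDiff ℝ 1 C := by rw [hC_def]; exact contDiff_const.mul (hR.mul hP)
  have hD1 : ContDiff ℝ 1 D := by rw [hD_def]; exact contDiff_const.mul (hR.mul hQ)
  have cR : Continuous R := hR.continuous
  have cP : Continuous P := hP.continuous
  have cQ : Continuous Q := hQ.continuous
  have cA : Continuous A := hA1.continuous
  have cB : Continuous B := hB1.continuous
  have cpA : Continuous (pd 0 A) := continuous_pd hA1 0
  have cpB : Continuous (pd 1 B) := continuous_pd hB1 1
  have cpC : Continuous (pd 2 C) := continuous_pd hC1 2
  have cpD : Continuous (pd 3 D) := continuous_pd hD1 3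
  -- the divergence identity
  have hkey : ∀ p : Fin 4 → ℝ, 0 ≤ p 0 → 0 ≤ p 1 →
      pd 0 A p = pd 2 C p + pd 3 D p - pd 1 B p := by
    intro p h0 h1
    have eA : pd 0 A p = 2 * (2 * R p * pd 0 R p) := by
      rw [hA_def, pd_const_mul (hR.pow 2) 2 0 p, pd_sq hR]
    have eB : pd 1 B p
        = 2 * P p * pd 1 P p + 2 * Q p * pd 1 Q p - 2 * R p * pd 1 R p := by
      rw [hB_def, pd_sub ((hP.pow 2).add (hQ.pow 2)) (hR.pow 2),
        pd_add (hP.pow 2) (hQ.pow 2), pd_sq hP, pd_sq hQ, pd_sq hR]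
    have eC : pd 2 C p = 2 * (pd 2 R p * P p + R p * pd 2 P p) := by
      rw [hC_def, pd_const_mul (hR.mul hP) 2 2 p, pd_mul hR hP]
    have eD : pd 3 D p = 2 * (pd 3 R p * Q p + R p * pd 3 Q p) := by
      rw [hD_def, pd_const_mul (hR.mul hQ) 2 3 p, pd_mul hR hQ]
    rw [eA, eB, eC, eD]
    linear_combination (2 * R p) * (e1 p h0 h1) + (2 * P p) * (e2 p h0 h1)
      + (2 * Q p) * (e3 p h0 h1)
  -- periodicity of C in x and of D in y
  have perC : ∀ u z y : ℝ, C ![u, z, 1, y] = C ![u, z, 0, y] := by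
    intro u z y
    have h := hperx ![u, z, 0, y]
    have hval : (![u, z, 0, y] : Fin 4 → ℝ) 2 + 1 = 1 := by simp
    rw [hval, upd2] at h
    rw [hC_def]; simp only
    rw [h.1, h.2.1]
  have perD : ∀ u z x : ℝ, D ![u, z, x, 1] = D ![u, z, x, 0] := by
    intro u z x
    have h := hpery ![u, z, x, 0]
    have hval : (![u, z, x, 0] : Fin 4 → ℝ) 3 + 1 = 1 := by simp
    rw [hval, upd3] at h
    rw [hD_def]; simp only
    rw [h.1, h.2.2]
  -- Step D: the y-divergence term vanishes
  have stepD : ∀ z x : ℝ, 0 ≤ z → z ≤ T →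
      (∫ y in (0:ℝ)..1, ∫ u in (0:ℝ)..(T - z), pd 3 D ![u, z, x, y]) = 0 := by
    intro z x hz0 hzT
    rw [rect_swap (fun y u => pd 3 D ![u, z, x, y]) (by fun_prop)
      zero_le_one (by linarith)]
    have h0 : ∀ u : ℝ, (∫ y in (0:ℝ)..1, pd 3 D ![u, z, x, y]) = 0 := by
      intro u
      have hftc := key_ftc hD1 3 ![u, z, x, 0] 0 1
      simp only [upd3] at hftc
      rw [hftc, perD u z x, sub_self]
    simp only [h0, intervalIntegral.integral_zero]
  -- Step C: the x-divergence term vanishes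
  have stepC : ∀ z : ℝ, 0 ≤ z → z ≤ T →
      (∫ x in (0:ℝ)..1, ∫ y in (0:ℝ)..1,
        ∫ u in (0:ℝ)..(T - z), pd 2 C ![u, z, x, y]) = 0 := by
    intro z hz0 hzT
    have h1 : ∀ x : ℝ, (∫ y in (0:ℝ)..1, ∫ u in (0:ℝ)..(T - z), pd 2 C ![u, z, x, y])
        = ∫ u in (0:ℝ)..(T - z), ∫ y in (0:ℝ)..1, pd 2 C ![u, z, x, y] := fun x =>
      rect_swap (fun y u => pd 2 C ![u, z, x, y]) (by fun_prop) zero_le_one (by linarith)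
    simp only [h1]
    rw [rect_swap (fun x u => ∫ y in (0:ℝ)..1, pd 2 C ![u, z, x, y]) (by fun_prop)
      zero_le_one (by linarith)]
    have h2 : ∀ u : ℝ, (∫ x in (0:ℝ)..1, ∫ y in (0:ℝ)..1, pd 2 C ![u, z, x, y])
        = ∫ y in (0:ℝ)..1, ∫ x in (0:ℝ)..1, pd 2 C ![u, z, x, y] := fun u =>
      rect_swap (fun x y => pd 2 C ![u, z, x, y]) (by fun_prop) zero_le_one zero_le_one
    simp only [h2]
    have h3 : ∀ u y : ℝ, (∫ x in (0:ℝ)..1, pd 2 C ![u, z, x, y]) = 0 := by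
      intro u y
      have hftc := key_ftc hC1 2 ![u, z, 0, y] 0 1
      simp only [upd2] at hftc
      rw [hftc, perC u z y, sub_self]
    simp only [h3, intervalIntegral.integral_zero]
  -- Step B1: move the u-integral outside x, y
  have stepB1 : ∀ z : ℝ, 0 ≤ z → z ≤ T →
      (∫ x in (0:ℝ)..1, ∫ y in (0:ℝ)..1,
          ∫ u in (0:ℝ)..(T - z), pd 1 B ![u, z, x, y])
        = ∫ u in (0:ℝ)..(T - z), ∫ x in (0:ℝ)..1,
            ∫ y in (0:ℝ)..1, pd 1 B ![u, z, x, y] := by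
    intro z hz0 hzT
    have h1 : ∀ x : ℝ, (∫ y in (0:ℝ)..1, ∫ u in (0:ℝ)..(T - z), pd 1 B ![u, z, x, y])
        = ∫ u in (0:ℝ)..(T - z), ∫ y in (0:ℝ)..1, pd 1 B ![u, z, x, y] := fun x =>
      rect_swap (fun y u => pd 1 B ![u, z, x, y]) (by fun_prop) zero_le_one (by linarith)
    simp only [h1]
    exact rect_swap (fun x u => ∫ y in (0:ℝ)..1, pd 1 B ![u, z, x, y]) (by fun_prop)
      zero_le_one (by linarith)
  -- Step B2: triangle swap
  have stepB2 : (∫ z in (0:ℝ)..T, ∫ u in (0:ℝ)..(T - z), ∫ x in (0:ℝ)..1,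
        ∫ y in (0:ℝ)..1, pd 1 B ![u, z, x, y])
      = ∫ u in (0:ℝ)..T, ∫ z in (0:ℝ)..(T - u), ∫ x in (0:ℝ)..1,
        ∫ y in (0:ℝ)..1, pd 1 B ![u, z, x, y] :=
    tri_swap (fun u z => ∫ x in (0:ℝ)..1, ∫ y in (0:ℝ)..1, pd 1 B ![u, z, x, y])
      (by fun_prop) hT.le
  -- Step B3: FTC in z
  have stepB3 : ∀ u : ℝ, 0 ≤ u → u ≤ T →
      (∫ z in (0:ℝ)..(T - u), ∫ x in (0:ℝ)..1, ∫ y in (0:ℝ)..1, pd 1 B ![u, z, x, y])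
        = (∫ x in (0:ℝ)..1, ∫ y in (0:ℝ)..1, B ![u, T - u, x, y])
          - ∫ x in (0:ℝ)..1, ∫ y in (0:ℝ)..1, B ![u, 0, x, y] := by
    intro u hu0 huT
    rw [rect_swap (fun z x => ∫ y in (0:ℝ)..1, pd 1 B ![u, z, x, y]) (by fun_prop)
      (by linarith) zero_le_one]
    have h1 : ∀ x : ℝ, (∫ z in (0:ℝ)..(T - u), ∫ y in (0:ℝ)..1, pd 1 B ![u, z, x, y])
        = ∫ y in (0:ℝ)..1, ∫ z in (0:ℝ)..(T - u), pd 1 B ![u, z, x, y] := fun x =>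
      rect_swap (fun z y => pd 1 B ![u, z, x, y]) (by fun_prop) (by linarith) zero_le_one
    simp only [h1]
    have h2 : ∀ x y : ℝ, (∫ z in (0:ℝ)..(T - u), pd 1 B ![u, z, x, y])
        = B ![u, T - u, x, y] - B ![u, 0, x, y] := by
      intro x y
      have hftc := key_ftc hB1 1 ![u, 0, x, y] 0 (T - u)
      simpa only [upd1] using hftc
    simp only [h2]
    have h3 : ∀ x : ℝ, (∫ y in (0:ℝ)..1, (B ![u, T - u, x, y] - B ![u, 0, x, y]))
        = (∫ y in (0:ℝ)..1, B ![u, T - u, x, y])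
          - ∫ y in (0:ℝ)..1, B ![u, 0, x, y] := fun x =>
      intervalIntegral.integral_sub (Continuous.intervalIntegrable (by fun_prop) _ _)
        (Continuous.intervalIntegrable (by fun_prop) _ _)
    simp only [h3]
    exact intervalIntegral.integral_sub
      (Continuous.intervalIntegrable (by fun_prop) _ _)
      (Continuous.intervalIntegrable (by fun_prop) _ _)
  -- FTC in u plus divergence identity, pointwise in (z, x, y)
  have stepA : ∀ z x y : ℝ, 0 ≤ z → z ≤ T →
      A ![T - z, z, x, y] = A ![0, z, x, y]
        + ((∫ u in (0:ℝ)..(T - z), pd 2 C ![u, z, x, y])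
          + (∫ u in (0:ℝ)..(T - z), pd 3 D ![u, z, x, y])
          - ∫ u in (0:ℝ)..(T - z), pd 1 B ![u, z, x, y]) := by
    intro z x y hz0 hzT
    have hftc := key_ftc hA1 0 ![0, z, x, y] 0 (T - z)
    simp only [upd0] at hftc
    have hcongr : (∫ u in (0:ℝ)..(T - z), pd 0 A ![u, z, x, y])
        = ∫ u in (0:ℝ)..(T - z), (pd 2 C ![u, z, x, y] + pd 3 D ![u, z, x, y]
            - pd 1 B ![u, z, x, y]) := by
      apply intervalIntegral.integral_congr
      intro u hu
      rw [Set.uIcc_of_le (by linarith : (0:ℝ) ≤ T - z)] at hu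
      have h0 : (0:ℝ) ≤ (![u, z, x, y] : Fin 4 → ℝ) 0 := by simpa using hu.1
      have h1 : (0:ℝ) ≤ (![u, z, x, y] : Fin 4 → ℝ) 1 := by simpa using hz0
      exact hkey _ h0 h1
    have hsplit : (∫ u in (0:ℝ)..(T - z), (pd 2 C ![u, z, x, y] + pd 3 D ![u, z, x, y]
          - pd 1 B ![u, z, x, y]))
        = (∫ u in (0:ℝ)..(T - z), pd 2 C ![u, z, x, y])
          + (∫ u in (0:ℝ)..(T - z), pd 3 D ![u, z, x, y])
          - ∫ u in (0:ℝ)..(T - z), pd 1 B ![u, z, x, y] := by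
      rw [intervalIntegral.integral_sub (Continuous.intervalIntegrable (by fun_prop) _ _)
          (Continuous.intervalIntegrable (by fun_prop) _ _),
        intervalIntegral.integral_add (Continuous.intervalIntegrable (by fun_prop) _ _)
          (Continuous.intervalIntegrable (by fun_prop) _ _)]
    rw [hcongr, hsplit] at hftc
    linarith
  -- split at the y level
  have ysplit : ∀ z x : ℝ, 0 ≤ z → z ≤ T →
      (∫ y in (0:ℝ)..1, (A ![T - z, z, x, y] + B ![T - z, z, x, y]))
        = (∫ y in (0:ℝ)..1, (A ![0, z, x, y] + B ![T - z, z, x, y]))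
          + ((∫ y in (0:ℝ)..1, ∫ u in (0:ℝ)..(T - z), pd 2 C ![u, z, x, y])
            - ∫ y in (0:ℝ)..1, ∫ u in (0:ℝ)..(T - z), pd 1 B ![u, z, x, y]) := by
    intro z x hz0 hzT
    have hpt : ∀ y : ℝ, A ![T - z, z, x, y] + B ![T - z, z, x, y]
        = (A ![0, z, x, y] + B ![T - z, z, x, y])
          + ((∫ u in (0:ℝ)..(T - z), pd 2 C ![u, z, x, y])
            + (∫ u in (0:ℝ)..(T - z), pd 3 D ![u, z, x, y])
            - ∫ u in (0:ℝ)..(T - z), pd 1 B ![u, z, x, y]) := by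
      intro y
      have := stepA z x y hz0 hzT
      linarith
    rw [intervalIntegral.integral_congr (g := fun y =>
        (A ![0, z, x, y] + B ![T - z, z, x, y])
          + ((∫ u in (0:ℝ)..(T - z), pd 2 C ![u, z, x, y])
            + (∫ u in (0:ℝ)..(T - z), pd 3 D ![u, z, x, y])
            - ∫ u in (0:ℝ)..(T - z), pd 1 B ![u, z, x, y]))
      (fun y _ => hpt y)]
    rw [intervalIntegral.integral_add (Continuous.intervalIntegrable (by fun_prop) _ _)
        (Continuous.intervalIntegrable (by fun_prop) _ _),
      intervalIntegral.integral_sub (Continuous.intervalIntegrable (by fun_prop) _ _)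
        (Continuous.intervalIntegrable (by fun_prop) _ _),
      intervalIntegral.integral_add
        (f := fun y => ∫ u in (0:ℝ)..(T - z), pd 2 C ![u, z, x, y])
        (g := fun y => ∫ u in (0:ℝ)..(T - z), pd 3 D ![u, z, x, y])
        (Continuous.intervalIntegrable (by fun_prop) _ _)
        (Continuous.intervalIntegrable (by fun_prop) _ _)]
    rw [stepD z x hz0 hzT]
    ring
  -- split at the x level
  have xsplit : ∀ z : ℝ, 0 ≤ z → z ≤ T →
      (∫ x in (0:ℝ)..1, ∫ y in (0:ℝ)..1, (A ![T - z, z, x, y] + B ![T - z, z, x, y]))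
        = (∫ x in (0:ℝ)..1, ∫ y in (0:ℝ)..1, (A ![0, z, x, y] + B ![T - z, z, x, y]))
          - ∫ u in (0:ℝ)..(T - z), ∫ x in (0:ℝ)..1, ∫ y in (0:ℝ)..1,
              pd 1 B ![u, z, x, y] := by
    intro z hz0 hzT
    rw [intervalIntegral.integral_congr (g := fun x =>
        (∫ y in (0:ℝ)..1, (A ![0, z, x, y] + B ![T - z, z, x, y]))
          + ((∫ y in (0:ℝ)..1, ∫ u in (0:ℝ)..(T - z), pd 2 C ![u, z, x, y])
            - ∫ y in (0:ℝ)..1, ∫ u in (0:ℝ)..(T - z), pd 1 B ![u, z, x, y]))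
      (fun x _ => ysplit z x hz0 hzT)]
    rw [intervalIntegral.integral_add (Continuous.intervalIntegrable (by fun_prop) _ _)
        (Continuous.intervalIntegrable (by fun_prop) _ _),
      intervalIntegral.integral_sub (Continuous.intervalIntegrable (by fun_prop) _ _)
        (Continuous.intervalIntegrable (by fun_prop) _ _)]
    rw [stepC z hz0 hzT, stepB1 z hz0 hzT]
    ring
  -- split at the z level
  have zmain : (∫ z in (0:ℝ)..T, ∫ x in (0:ℝ)..1, ∫ y in (0:ℝ)..1,
        (A ![T - z, z, x, y] + B ![T - z, z, x, y]))
      = (∫ z in (0:ℝ)..T, ∫ x in (0:ℝ)..1, ∫ y in (0:ℝ)..1,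
          (A ![0, z, x, y] + B ![T - z, z, x, y]))
        - ∫ z in (0:ℝ)..T, ∫ u in (0:ℝ)..(T - z), ∫ x in (0:ℝ)..1,
            ∫ y in (0:ℝ)..1, pd 1 B ![u, z, x, y] := by
    rw [intervalIntegral.integral_congr (g := fun z =>
        (∫ x in (0:ℝ)..1, ∫ y in (0:ℝ)..1, (A ![0, z, x, y] + B ![T - z, z, x, y]))
          - ∫ u in (0:ℝ)..(T - z), ∫ x in (0:ℝ)..1, ∫ y in (0:ℝ)..1,
              pd 1 B ![u, z, x, y])
      (fun z hz => by
        rw [Set.uIcc_of_le hT.le] at hz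
        exact xsplit z hz.1 hz.2)]
    exact intervalIntegral.integral_sub (Continuous.intervalIntegrable (by fun_prop) _ _)
      (Continuous.intervalIntegrable (by fun_prop) _ _)
  -- evaluate the B flux term
  have hBside : (∫ z in (0:ℝ)..T, ∫ u in (0:ℝ)..(T - z), ∫ x in (0:ℝ)..1,
        ∫ y in (0:ℝ)..1, pd 1 B ![u, z, x, y])
      = (∫ z in (0:ℝ)..T, ∫ x in (0:ℝ)..1, ∫ y in (0:ℝ)..1, B ![T - z, z, x, y])
        - ∫ u in (0:ℝ)..T, ∫ x in (0:ℝ)..1, ∫ y in (0:ℝ)..1, B ![u, 0, x, y] := by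
    rw [stepB2]
    rw [intervalIntegral.integral_congr (g := fun u =>
        (∫ x in (0:ℝ)..1, ∫ y in (0:ℝ)..1, B ![u, T - u, x, y])
          - ∫ x in (0:ℝ)..1, ∫ y in (0:ℝ)..1, B ![u, 0, x, y])
      (fun u hu => by
        rw [Set.uIcc_of_le hT.le] at hu
        exact stepB3 u hu.1 hu.2)]
    rw [intervalIntegral.integral_sub (Continuous.intervalIntegrable (by fun_prop) _ _)
      (Continuous.intervalIntegrable (by fun_prop) _ _)]
    congr 1
    have hrefl := intervalIntegral.integral_comp_sub_left (a := (0:ℝ)) (b := T)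
      (fun z => ∫ x in (0:ℝ)..1, ∫ y in (0:ℝ)..1, B ![T - z, z, x, y]) T
    simp only [sub_sub_cancel, sub_self, sub_zero] at hrefl
    exact hrefl
  -- split the A and B pieces of the slanted slice integral
  have hs0y : ∀ z x : ℝ, (∫ y in (0:ℝ)..1, (A ![0, z, x, y] + B ![T - z, z, x, y]))
      = (∫ y in (0:ℝ)..1, A ![0, z, x, y])
        + ∫ y in (0:ℝ)..1, B ![T - z, z, x, y] := fun z x =>
    intervalIntegral.integral_add (Continuous.intervalIntegrable (by fun_prop) _ _)
      (Continuous.intervalIntegrable (by fun_prop) _ _)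
  have hs0x : ∀ z : ℝ, (∫ x in (0:ℝ)..1, ∫ y in (0:ℝ)..1,
        (A ![0, z, x, y] + B ![T - z, z, x, y]))
      = (∫ x in (0:ℝ)..1, ∫ y in (0:ℝ)..1, A ![0, z, x, y])
        + ∫ x in (0:ℝ)..1, ∫ y in (0:ℝ)..1, B ![T - z, z, x, y] := by
    intro z
    simp only [hs0y]
    exact intervalIntegral.integral_add (Continuous.intervalIntegrable (by fun_prop) _ _)
      (Continuous.intervalIntegrable (by fun_prop) _ _)
  have hs0 : (∫ z in (0:ℝ)..T, ∫ x in (0:ℝ)..1, ∫ y in (0:ℝ)..1,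
        (A ![0, z, x, y] + B ![T - z, z, x, y]))
      = (∫ z in (0:ℝ)..T, ∫ x in (0:ℝ)..1, ∫ y in (0:ℝ)..1, A ![0, z, x, y])
        + ∫ z in (0:ℝ)..T, ∫ x in (0:ℝ)..1, ∫ y in (0:ℝ)..1, B ![T - z, z, x, y] := by
    simp only [hs0x]
    exact intervalIntegral.integral_add (Continuous.intervalIntegrable (by fun_prop) _ _)
      (Continuous.intervalIntegrable (by fun_prop) _ _)
  -- the main identity
  have main : (∫ z in (0:ℝ)..T, ∫ x in (0:ℝ)..1, ∫ y in (0:ℝ)..1,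
        (A ![T - z, z, x, y] + B ![T - z, z, x, y]))
      = (∫ z in (0:ℝ)..T, ∫ x in (0:ℝ)..1, ∫ y in (0:ℝ)..1, A ![0, z, x, y])
        + ∫ u in (0:ℝ)..T, ∫ x in (0:ℝ)..1, ∫ y in (0:ℝ)..1, B ![u, 0, x, y] := by
    rw [zmain, hBside, hs0]
    ring
  -- rewrite the goal
  have hE : ∀ v : Fin 4 → ℝ, R v ^ 2 + P v ^ 2 + Q v ^ 2 = A v + B v := by
    intro v; rw [hA_def, hB_def]; ring
  simp only [hE]
  rw [main]
  have hAval : (∫ z in (0:ℝ)..T, ∫ x in (0:ℝ)..1, ∫ y in (0:ℝ)..1, A ![0, z, x, y])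
      = 2 * ∫ z in (0:ℝ)..T, ∫ x in (0:ℝ)..1, ∫ y in (0:ℝ)..1, R ![0, z, x, y] ^ 2 := by
    simp only [hA_def]
    simp only [intervalIntegral.integral_const_mul]
  rw [hAval]
  -- final inequality
  have mono_y : ∀ u x : ℝ, (∫ y in (0:ℝ)..1, B ![u, 0, x, y])
      ≤ ∫ y in (0:ℝ)..1, (P ![u, 0, x, y] ^ 2 + Q ![u, 0, x, y] ^ 2) := by
    intro u x
    apply intervalIntegral.integral_mono_on zero_le_one
      (Continuous.intervalIntegrable (by fun_prop) _ _)
      (Continuous.intervalIntegrable (by fun_prop) _ _)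
    intro y _
    simp only [hB_def]
    nlinarith [sq_nonneg (R ![u, 0, x, y])]
  have mono_x : ∀ u : ℝ, (∫ x in (0:ℝ)..1, ∫ y in (0:ℝ)..1, B ![u, 0, x, y])
      ≤ ∫ x in (0:ℝ)..1, ∫ y in (0:ℝ)..1,
          (P ![u, 0, x, y] ^ 2 + Q ![u, 0, x, y] ^ 2) := by
    intro u
    apply intervalIntegral.integral_mono_on zero_le_one
      (Continuous.intervalIntegrable (by fun_prop) _ _)
      (Continuous.intervalIntegrable (by fun_prop) _ _)
    intro x _
    exact mono_y u x
  have mono_z : (∫ u in (0:ℝ)..T, ∫ x in (0:ℝ)..1, ∫ y in (0:ℝ)..1, B ![u, 0, x, y])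
      ≤ ∫ u in (0:ℝ)..T, ∫ x in (0:ℝ)..1, ∫ y in (0:ℝ)..1,
          (P ![u, 0, x, y] ^ 2 + Q ![u, 0, x, y] ^ 2) := by
    apply intervalIntegral.integral_mono_on hT.le
      (Continuous.intervalIntegrable (by fun_prop) _ _)
      (Continuous.intervalIntegrable (by fun_prop) _ _)
    intro u _
    exact mono_x u
  have nn_y : ∀ u x : ℝ, 0 ≤ ∫ y in (0:ℝ)..1,
      (P ![u, 0, x, y] ^ 2 + Q ![u, 0, x, y] ^ 2) := by
    intro u x
    apply intervalIntegral.integral_nonneg zero_le_one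
    intro y _
    positivity
  have nn_x : ∀ u : ℝ, 0 ≤ ∫ x in (0:ℝ)..1, ∫ y in (0:ℝ)..1,
      (P ![u, 0, x, y] ^ 2 + Q ![u, 0, x, y] ^ 2) := by
    intro u
    apply intervalIntegral.integral_nonneg zero_le_one
    intro x _
    exact nn_y u x
  have nn_z : 0 ≤ ∫ u in (0:ℝ)..T, ∫ x in (0:ℝ)..1, ∫ y in (0:ℝ)..1,
      (P ![u, 0, x, y] ^ 2 + Q ![u, 0, x, y] ^ 2) := by
    apply intervalIntegral.integral_nonneg hT.le
    intro u _
    exact nn_x u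
  linarith
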